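/- arXiv:2301.02375 — 3 statements merged into one kernel-verified Lean document; each statement's English description precedes it below -/
import Mathlib

section
/- Let S be a finite set of states and A a finite set of actions, with discount factor γ ∈ (0,1). Let Q* : S × A → ℝ be the optimal state-action value function satisfying the Bellman optimality equation Q*(s,a) = r(s,a) + γ ∑_{s'} P(s'|s,a) · max_{a'} Q*(s',a'), and let V*(s) = max_a Q*(s,a). Let f : S × A → ℝ be any function and let π_f be a greedy policy with respect to f, i.e., f(s, π_f(s)) = max_a f(s,a) for all s. Let V^{π_f} be the value of π_f, i.e., V^{π_f}(s) = r(s, π_f(s)) + γ ∑_{s'} P(s'|s, π_f(s)) · V^{π_f}(s'). Then ‖V* − V^{π_f}‖_∞ ≤ 2‖f − Q*‖_∞ / (1 − γ). -/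
/-- Performance gap lemma: if `πf` is greedy with respect to `f`, then
`‖V* − V^{π_f}‖_∞ ≤ 2‖f − Q*‖_∞ / (1 − γ)`. -/
theorem performance_gap
    {S A : Type*} [Fintype S] [Nonempty S] [Fintype A] [Nonempty A]
    (P : S → A → S → ℝ) (r : S → A → ℝ) (γ : ℝ)
    (hγ : 0 < γ) (hγ1 : γ < 1)
    (hPnn : ∀ s a s', 0 ≤ P s a s')
    (hPsum : ∀ s a, ∑ s', P s a s' = 1)
    (Qstar : S → A → ℝ) (Vstar : S → ℝ)
    (hV : ∀ s, Vstar s = ⨆ a, Qstar s a)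
    (hBellman : ∀ s a, Qstar s a = r s a + γ * ∑ s', P s a s' * Vstar s')
    (f : S → A → ℝ) (πf : S → A)
    (hgreedy : ∀ s, f s (πf s) = ⨆ a, f s a)
    (Vπ : S → ℝ)
    (hVπ : ∀ s, Vπ s = r s (πf s) + γ * ∑ s', P s (πf s) s' * Vπ s') :
    (⨆ s, |Vstar s - Vπ s|) ≤ 2 * (⨆ p : S × A, |f p.1 p.2 - Qstar p.1 p.2|) / (1 - γ) := by
  set M : ℝ := ⨆ s, |Vstar s - Vπ s| with hMdef
  set ε : ℝ := ⨆ p : S × A, |f p.1 p.2 - Qstar p.1 p.2| with hεdef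
  have hM : ∀ s, |Vstar s - Vπ s| ≤ M := fun s =>
    le_ciSup (f := fun s => |Vstar s - Vπ s|) (Set.finite_range _).bddAbove s
  have hε : ∀ s a, |f s a - Qstar s a| ≤ ε := fun s a =>
    le_ciSup (f := fun p : S × A => |f p.1 p.2 - Qstar p.1 p.2|)
      (Set.finite_range _).bddAbove (s, a)
  have hεnn : 0 ≤ ε := le_trans (abs_nonneg _) (hε Classical.ofNonempty Classical.ofNonempty)
  have hMnn : 0 ≤ M := le_trans (abs_nonneg _) (hM Classical.ofNonempty)
  have hQleV : ∀ s a, Qstar s a ≤ Vstar s := fun s a => by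
    rw [hV]; exact le_ciSup (f := fun a => Qstar s a) (Set.finite_range _).bddAbove a
  have hfle : ∀ s a, f s a ≤ f s (πf s) := fun s a => by
    rw [hgreedy]; exact le_ciSup (f := fun a => f s a) (Set.finite_range _).bddAbove a
  have hVle : ∀ s, Vstar s ≤ Qstar s (πf s) + 2 * ε := by
    intro s
    rw [hV]
    apply ciSup_le
    intro a
    have h1 := abs_le.mp (hε s a)
    have h2 := abs_le.mp (hε s (πf s))
    have := hfle s a
    linarith [h1.1, h2.2]
  have hkey : ∀ s (x y : S → ℝ),
      γ * (∑ s', P s (πf s) s' * x s') - γ * (∑ s', P s (πf s) s' * y s')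
        = γ * ∑ s', P s (πf s) s' * (x s' - y s') := by
    intro s x y
    rw [show (∑ s', P s (πf s) s' * (x s' - y s'))
        = ∑ s', P s (πf s) s' * x s' - ∑ s', P s (πf s) s' * y s' from by
      rw [← Finset.sum_sub_distrib]
      exact Finset.sum_congr rfl fun s' _ => mul_sub _ _ _]
    ring
  have hsum : ∀ s a (x y : S → ℝ), (∀ s', x s' - y s' ≤ M) →
      ∑ s', P s a s' * (x s' - y s') ≤ M := by
    intro s a x y h
    calc ∑ s', P s a s' * (x s' - y s')
        ≤ ∑ s', P s a s' * M :=
          Finset.sum_le_sum fun s' _ =>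
            mul_le_mul_of_nonneg_left (h s') (hPnn s a s')
      _ = M := by rw [← Finset.sum_mul, hPsum, one_mul]
  have hpt : ∀ s, |Vstar s - Vπ s| ≤ 2 * ε + γ * M := by
    intro s
    rw [abs_le]
    have e1 : Qstar s (πf s) - Vπ s = γ * ∑ s', P s (πf s) s' * (Vstar s' - Vπ s') := by
      rw [hVπ s, hBellman s (πf s), ← hkey s Vstar Vπ]; ring
    constructor
    · have hq := hQleV s (πf s)
      have hb : Vπ s - Qstar s (πf s) ≤ γ * M := by
        have e2 : Vπ s - Qstar s (πf s) = γ * ∑ s', P s (πf s) s' * (Vπ s' - Vstar s') := by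
          rw [hVπ s, hBellman s (πf s), ← hkey s Vπ Vstar]; ring
        rw [e2]
        refine mul_le_mul_of_nonneg_left (hsum s (πf s) Vπ Vstar fun s' => ?_) hγ.le
        have := hM s'
        rw [abs_le] at this
        linarith [this.1]
      linarith
    · have h1 := hVle s
      have hb : Qstar s (πf s) - Vπ s ≤ γ * M := by
        rw [e1]
        refine mul_le_mul_of_nonneg_left (hsum s (πf s) Vstar Vπ fun s' => ?_) hγ.le
        exact le_trans (le_abs_self _) (hM s')
      linarith
  have hMle : M ≤ 2 * ε + γ * M := ciSup_le hpt
  rw [le_div_iff₀ (by linarith : (0:ℝ) < 1 - γ)]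
  nlinarith
end

section
/- Let (X_a)_{a∈A} be a finite nonempty family of i.i.d. real random variables with common distribution having mean μ, and suppose the variables are not almost surely constant and |A| ≥ 2. If each X_a is integrable and max is integrable, then E[max_{a∈A} X_a] > μ; i.e., the overestimation bias of the max of at least two i.i.d. non-degenerate unbiased estimators is strictly positive. -/
open MeasureTheory ProbabilityTheory

private lemma aux_ae_const {Ω : Type*} [MeasurableSpace Ω] (μ : Measure Ω)
    [IsProbabilityMeasure μ] {Y : Ω → ℝ} (hY : Measurable Y)
    (h01 : ∀ c : ℝ, μ {ω | Y ω ≤ c} = 0 ∨ μ {ω | Y ω ≤ c} = 1) :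
    ∃ c : ℝ, Y =ᵐ[μ] fun _ => c := by
  set S : Set ℝ := {c : ℝ | μ {ω | Y ω ≤ c} = 1} with hS
  have hmono : ∀ {c d : ℝ}, c ≤ d → μ {ω | Y ω ≤ c} ≤ μ {ω | Y ω ≤ d} := by
    intro c d hcd
    exact measure_mono (fun ω hω => le_trans hω hcd)
  have hne : S.Nonempty := by
    by_contra h
    have h0 : ∀ c : ℝ, μ {ω | Y ω ≤ c} = 0 := by
      intro c
      rcases h01 c with h' | h'
      · exact h'
      · exact absurd h' (fun hc => h ⟨c, hc⟩)
    have huniv : (Set.univ : Set Ω) = ⋃ n : ℕ, {ω | Y ω ≤ (n : ℝ)} := by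
      ext ω
      simp only [Set.mem_univ, Set.mem_iUnion, Set.mem_setOf_eq, true_iff]
      exact exists_nat_ge (Y ω)
    have : μ Set.univ = 0 := by
      rw [huniv]
      exact measure_iUnion_null fun n => h0 n
    simp [measure_univ] at this
  have hbdd : BddBelow S := by
    by_contra h
    rw [not_bddBelow_iff] at h
    have hall : ∀ n : ℕ, μ {ω | Y ω ≤ -(n : ℝ)} = 1 := by
      intro n
      obtain ⟨c, hc, hlt⟩ := h (-(n : ℝ))
      exact le_antisymm prob_le_one (le_trans (le_of_eq hc.symm) (hmono hlt.le))
    have hanti : Antitone fun n : ℕ => {ω | Y ω ≤ -(n : ℝ)} := by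
      intro n k hnk ω hω
      simp only [Set.mem_setOf_eq] at *
      exact le_trans hω (neg_le_neg ((Nat.cast_le (α := ℝ)).2 hnk))
    have hempty : (⋂ n : ℕ, {ω | Y ω ≤ -(n : ℝ)}) = (∅ : Set Ω) := by
      ext ω
      simp only [Set.mem_iInter, Set.mem_setOf_eq, Set.mem_empty_iff_false, iff_false, not_forall]
      obtain ⟨n, hn⟩ := exists_nat_gt (-(Y ω))
      exact ⟨n, by push_cast; linarith⟩
    have := hanti.measure_iInter (fun n => (measurableSet_le hY measurable_const).nullMeasurableSet)
      ⟨0, by rw [hall 0]; exact ENNReal.one_ne_top⟩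
    rw [hempty] at this
    simp only [measure_empty, hall] at this
    simp at this
  set c₀ : ℝ := sInf S with hc₀
  have h1 : μ {ω | Y ω ≤ c₀} = 1 := by
    have heq : {ω | Y ω ≤ c₀} = ⋂ n : ℕ, {ω | Y ω ≤ c₀ + 1 / ((n : ℝ) + 1)} := by
      ext ω
      simp only [Set.mem_iInter, Set.mem_setOf_eq]
      constructor
      · intro hω n
        have : (0:ℝ) < 1 / ((n : ℝ) + 1) := by positivity
        linarith
      · intro hω
        by_contra hlt
        push_neg at hlt
        obtain ⟨n, hn⟩ := exists_nat_one_div_lt (show (0:ℝ) < Y ω - c₀ by linarith)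
        have := hω n
        linarith
    have hone : ∀ n : ℕ, μ {ω | Y ω ≤ c₀ + 1 / ((n : ℝ) + 1)} = 1 := by
      intro n
      have hlt : c₀ < c₀ + 1 / ((n : ℝ) + 1) := by
        have : (0:ℝ) < 1 / ((n : ℝ) + 1) := by positivity
        linarith
      obtain ⟨s, hs, hslt⟩ := (csInf_lt_iff hbdd hne).1 hlt
      exact le_antisymm prob_le_one (le_trans (le_of_eq hs.symm) (hmono hslt.le))
    have hanti : Antitone fun n : ℕ => {ω | Y ω ≤ c₀ + 1 / ((n : ℝ) + 1)} := by
      intro n k hnk ω hω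
      simp only [Set.mem_setOf_eq] at *
      have h1 : 1 / ((k : ℝ) + 1) ≤ 1 / ((n : ℝ) + 1) := by
        apply one_div_le_one_div_of_le (by positivity)
        push_cast
        linarith [(Nat.cast_le (α := ℝ)).2 hnk]
      linarith
    rw [heq, hanti.measure_iInter (fun n => (measurableSet_le hY measurable_const).nullMeasurableSet)
      ⟨0, by rw [hone 0]; exact ENNReal.one_ne_top⟩]
    simp only [hone, iInf_const]
  have h2 : μ {ω | Y ω < c₀} = 0 := by
    have heq : {ω | Y ω < c₀} = ⋃ n : ℕ, {ω | Y ω ≤ c₀ - 1 / ((n : ℝ) + 1)} := by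
      ext ω
      simp only [Set.mem_iUnion, Set.mem_setOf_eq]
      constructor
      · intro hω
        obtain ⟨n, hn⟩ := exists_nat_one_div_lt (show (0:ℝ) < c₀ - Y ω by linarith)
        exact ⟨n, by linarith⟩
      · rintro ⟨n, hn⟩
        have : (0:ℝ) < 1 / ((n : ℝ) + 1) := by positivity
        linarith
    rw [heq]
    apply measure_iUnion_null
    intro n
    rcases h01 (c₀ - 1 / ((n : ℝ) + 1)) with h' | h'
    · exact h'
    · exfalso
      have hmem : c₀ - 1 / ((n : ℝ) + 1) ∈ S := h'
      have := csInf_le hbdd hmem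
      have hpos : (0:ℝ) < 1 / ((n : ℝ) + 1) := by positivity
      linarith
  refine ⟨c₀, ?_⟩
  have hsub : {ω | ¬ Y ω = c₀} ⊆ {ω | Y ω < c₀} ∪ {ω | Y ω ≤ c₀}ᶜ := by
    intro ω hω
    simp only [Set.mem_setOf_eq, Set.mem_union, Set.mem_compl_iff, not_le] at *
    rcases lt_trichotomy (Y ω) c₀ with h | h | h
    · exact Or.inl h
    · exact absurd h hω
    · exact Or.inr h
  have hcompl : μ ({ω | Y ω ≤ c₀}ᶜ) = 0 := by
    rw [measure_compl (measurableSet_le hY measurable_const) (measure_ne_top μ _), measure_univ, h1]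
    simp
  rw [Filter.EventuallyEq, ae_iff]
  exact measure_mono_null hsub (measure_union_null h2 hcompl)

private lemma aux_indep_self {Ω : Type*} [MeasurableSpace Ω] {μ : Measure Ω}
    [IsProbabilityMeasure μ] {Y : Ω → ℝ} (hY : Measurable Y)
    (hind : IndepFun Y Y μ) :
    ∃ c : ℝ, Y =ᵐ[μ] fun _ => c := by
  apply aux_ae_const μ hY
  intro c
  have := (indepFun_iff_measure_inter_preimage_eq_mul.1 hind) (Set.Iic c) (Set.Iic c)
    measurableSet_Iic measurableSet_Iic
  simp only [Set.inter_self] at this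
  set p := μ (Y ⁻¹' Set.Iic c) with hp
  have hsq : p = p * p := this
  rcases eq_or_ne p 0 with h0 | h0
  · left; exact h0
  · right
    have hne : p ≠ ⊤ := measure_ne_top μ _
    have : p * 1 = p * p := by rw [mul_one]; exact hsq
    exact ((ENNReal.mul_right_inj h0 hne).1 this).symm

/-- Strict overestimation bias: the expectation of the max of at least two i.i.d.
integrable, non-degenerate, unbiased estimators strictly exceeds the common mean. -/
theorem strict_overestimation_bias
    {Ω : Type*} [MeasurableSpace Ω] (μ : Measure Ω) [IsProbabilityMeasure μ]
    {A : Type*} [Fintype A] (hA : 2 ≤ Fintype.card A)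
    (X : A → Ω → ℝ) (m : ℝ)
    (hInt : ∀ a, Integrable (X a) μ)
    (hIntMax : Integrable (fun ω => ⨆ a, X a ω) μ)
    (hmean : ∀ a, ∫ ω, X a ω ∂μ = m)
    (hident : ∀ a b, IdentDistrib (X a) (X b) μ μ)
    (hindep : iIndepFun X μ)
    (hnondeg : ∀ a, ¬ ∃ c : ℝ, X a =ᵐ[μ] fun _ => c) :
    m < ∫ ω, ⨆ a, X a ω ∂μ := by
  obtain ⟨a, b, hab⟩ := Fintype.exists_pair_of_one_lt_card (α := A) (by omega)
  -- the key step given a positive expected positive part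
  have key : ∀ a b : A, 0 < ∫ ω, max (X b ω - X a ω) 0 ∂μ → m < ∫ ω, ⨆ c, X c ω ∂μ := by
    intro a b hpos
    have hg : Integrable (fun ω => max (X b ω - X a ω) 0) μ := ((hInt b).sub (hInt a)).pos_part
    have hle : ∀ ω, X a ω + max (X b ω - X a ω) 0 ≤ ⨆ c, X c ω := by
      intro ω
      have h1 : X a ω + max (X b ω - X a ω) 0 = max (X a ω) (X b ω) := by
        rcases le_total (X b ω) (X a ω) with h | h
        · rw [max_eq_right (by linarith), max_eq_left h]; ring
        · rw [max_eq_left (by linarith), max_eq_right h]; ring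
      rw [h1]
      have hbdd : BddAbove (Set.range fun c => X c ω) := Set.Finite.bddAbove (Set.finite_range _)
      exact max_le (le_ciSup hbdd a) (le_ciSup hbdd b)
    calc m < m + ∫ ω, max (X b ω - X a ω) 0 ∂μ := by linarith
    _ = ∫ ω, (X a ω + max (X b ω - X a ω) 0) ∂μ := by
        rw [integral_add (hInt a) hg, hmean a]
    _ ≤ ∫ ω, ⨆ c, X c ω ∂μ := integral_mono ((hInt a).add hg) hIntMax hle
  -- at least one of the two positive parts has positive mean
  have hg : Integrable (fun ω => max (X b ω - X a ω) 0) μ := ((hInt b).sub (hInt a)).pos_part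
  have hh : Integrable (fun ω => max (X a ω - X b ω) 0) μ := ((hInt a).sub (hInt b)).pos_part
  have hgnn : 0 ≤ ∫ ω, max (X b ω - X a ω) 0 ∂μ :=
    integral_nonneg fun ω => le_max_right _ _
  have hhnn : 0 ≤ ∫ ω, max (X a ω - X b ω) 0 ∂μ :=
    integral_nonneg fun ω => le_max_right _ _
  rcases hgnn.lt_or_eq with hlt | heq
  · exact key a b hlt
  rcases hhnn.lt_or_eq with hlt | heq'
  · exact key b a hlt
  -- both zero: X a = X b a.e., contradiction with independence + nondegeneracy
  exfalso
  have hae1 : (fun ω => max (X b ω - X a ω) 0) =ᵐ[μ] 0 :=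
    (integral_eq_zero_iff_of_nonneg (fun ω => le_max_right _ _) hg).1 heq.symm
  have hae2 : (fun ω => max (X a ω - X b ω) 0) =ᵐ[μ] 0 :=
    (integral_eq_zero_iff_of_nonneg (fun ω => le_max_right _ _) hh).1 heq'.symm
  have haeeq : X a =ᵐ[μ] X b := by
    filter_upwards [hae1, hae2] with ω h1 h2
    simp only [Pi.zero_apply, max_eq_right_iff] at h1 h2
    linarith
  -- replace X a by a measurable modification
  have haem : AEMeasurable (X a) μ := (hInt a).aemeasurable
  set Y : Ω → ℝ := haem.mk (X a) with hY
  have hYmeas : Measurable Y := haem.measurable_mk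
  have hXY : X a =ᵐ[μ] Y := haem.ae_eq_mk
  have hind : IndepFun (X a) (X b) μ := hindep.indepFun hab
  have hindYY : IndepFun Y Y μ := hind.congr hXY (haeeq.symm.trans hXY)
  obtain ⟨c, hc⟩ := aux_indep_self hYmeas hindYY
  exact hnondeg a ⟨c, hXY.trans hc⟩
end

section
/- In the performance-gap setting, the bound is tight up to a factor: there exists a finite MDP with γ ∈ (0,1), an approximate value function f with ‖f − Q*‖_∞ = ε > 0, and a greedy policy π_f with respect to f such that ‖V* − V^{π_f}‖_∞ ≥ 2γε/(1−γ). (Construction: two actions at a single decision state, one leading to a self-loop of reward per step differing by an amount on the order of ε, with f swapping the action ranking.) -/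
/-- Near-tightness of the performance gap bound: there is a finite MDP, an approximate
value function `f` with `‖f − Q*‖_∞ = ε > 0`, and a greedy policy `π_f` w.r.t. `f`
whose performance gap is at least `2γε/(1−γ)`. -/
theorem performance_gap_near_tight :
    ∃ (n m : ℕ) (_ : 0 < n) (_ : 0 < m)
      (P : Fin (n + 1) → Fin (m + 1) → Fin (n + 1) → ℝ)
      (r : Fin (n + 1) → Fin (m + 1) → ℝ) (γ ε : ℝ)
      (Qstar f : Fin (n + 1) → Fin (m + 1) → ℝ)
      (Vstar Vπ : Fin (n + 1) → ℝ) (πf : Fin (n + 1) → Fin (m + 1)),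
      0 < γ ∧ γ < 1 ∧ 0 < ε ∧
      (∀ s a s', 0 ≤ P s a s') ∧
      (∀ s a, ∑ s', P s a s' = 1) ∧
      (∀ s, Vstar s = ⨆ a, Qstar s a) ∧
      (∀ s a, Qstar s a = r s a + γ * ∑ s', P s a s' * Vstar s') ∧
      (∀ s, f s (πf s) = ⨆ a, f s a) ∧
      (∀ s, Vπ s = r s (πf s) + γ * ∑ s', P s (πf s) s' * Vπ s') ∧
      (⨆ p : Fin (n + 1) × Fin (m + 1), |f p.1 p.2 - Qstar p.1 p.2|) = ε ∧
      2 * γ * ε / (1 - γ) ≤ ⨆ s, |Vstar s - Vπ s| := by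
  refine ⟨1, 1, one_pos, one_pos,
    (fun s a s' => if s' = s then 1 else 0),
    (fun s a => if s = 0 ∧ a = 0 then 2 else 0),
    1/2, 1,
    (fun s a => if s = 0 then (if a = 0 then 4 else 2) else 0),
    (fun s _ => if s = 0 then 3 else 0),
    (fun s => if s = 0 then 4 else 0),
    (fun _ => 0),
    (fun s => if s = 0 then 1 else 0),
    by norm_num, by norm_num, one_pos, ?_, ?_, ?_, ?_, ?_, ?_, ?_, ?_⟩
  · intro s a s'; simp only []; split <;> norm_num
  · intro s a
    fin_cases s <;> simp [Fin.sum_univ_two]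
  · intro s
    fin_cases s
    · apply le_antisymm
      · apply le_ciSup_of_le (Finite.bddAbove_range _) (0 : Fin 2)
        norm_num
      · apply ciSup_le
        intro a; fin_cases a <;> norm_num
    · simp
  · intro s a
    fin_cases s <;> fin_cases a <;> simp [Fin.sum_univ_two] <;> norm_num
  · intro s
    simp
  · intro s
    fin_cases s <;> simp [Fin.sum_univ_two]
  · apply le_antisymm
    · apply ciSup_le
      rintro ⟨s, a⟩
      fin_cases s <;> fin_cases a <;> norm_num
    · apply le_ciSup_of_le (Finite.bddAbove_range _) ((0 : Fin 2), (0 : Fin 2))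
      norm_num
  · apply le_ciSup_of_le (Finite.bddAbove_range _) (0 : Fin 2)
    norm_num
end
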